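/- Let r > 0 and H be real numbers, and let real numbers Λ, E, p², B, q with p² > 0 satisfy the five equations: p² = −2B/(q r³); −E + (H + 5 − 4qB)/(4r) = 0; (2 + H)/r² − Λ = 2B²/r⁴ + E·p²; −H/r² + Λ = −2B²/r⁴ + (H + 1 + 4qB)·p²/(4r); −1/r² + Λ = 2B²/r⁴ + p²/(2r). Then qB = −(H − 1)(H + 4)/12. -/

import Mathlib

/-- the full reduced Einstein–Dirac–Maxwell system with p² > 0
forces qB = −(H − 1)(H + 4)/12. -/
theorem stmt_3 (r H Λ E p2 B q : ℝ) (hr : 0 < r) (hp2pos : 0 < p2)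
    (maxwell : p2 = -2 * B / (q * r ^ 3))
    (dirac : -E + (H + 5 - 4 * q * B) / (4 * r) = 0)
    (ein00 : (2 + H) / r ^ 2 - Λ = 2 * B ^ 2 / r ^ 4 + E * p2)
    (ein11 : -H / r ^ 2 + Λ = -2 * B ^ 2 / r ^ 4 + (H + 1 + 4 * q * B) * p2 / (4 * r))
    (ein22 : -1 / r ^ 2 + Λ = 2 * B ^ 2 / r ^ 4 + p2 / (2 * r)) :
    q * B = -(H - 1) * (H + 4) / 12 := by
  have hr0 : r ≠ 0 := ne_of_gt hr
  have hq : q ≠ 0 := by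
    intro h
    rw [h] at maxwell
    simp at maxwell
    linarith
  have hm : q * r ^ 3 * p2 = -2 * B := by
    field_simp at maxwell; linarith
  field_simp at dirac ein00 ein11 ein22
  have key1 : ((H + 3) * p2 * r - 4) * r ^ 5 = 0 := by
    linear_combination (-2*r^3) * ein00 - (r^3/2) * ein11 + (p2*r^6/2) * dirac
  have h1 : (H + 3) * p2 * r = 4 := by
    rcases mul_eq_zero.mp key1 with h | h
    · linarith
    · exact absurd h (pow_ne_zero 5 hr0)
  have key2 : (H - (1 - 3 * (q * B)) * p2 * r) * (8 * r ^ 5) = 0 := by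
    linear_combination 4*r^3*ein00 - r^3*ein11 + 4*r^3*ein22 - p2*r^6*dirac + 16*B*r^3*hm
  have h2 : H = (1 - 3 * (q * B)) * p2 * r := by
    rcases mul_eq_zero.mp key2 with h | h
    · linarith
    · exact absurd h (by positivity)
  have h4 : H * (H + 3) = (1 - 3 * (q * B)) * 4 := by
    linear_combination (H + 3) * h2 + (1 - 3 * (q * B)) * h1
  linear_combination h4 / 12
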